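/- In the setting of the fully discrete EQ scheme for the Allen–Cahn model with a Lagrange multiplier (Δh symmetric, G = Δh² + 2a·Δh + α·id, μ = G((φⁿ+φⁿ⁺¹)/2) + (1/2)((qⁿ+qⁿ⁺¹)/2)*q̄, L = ⟨M̄,μ⟩/⟨M̄,𝟙⟩, φⁿ⁺¹-φⁿ = -Δt·(M̄*(μ - L·𝟙)), qⁿ⁺¹-qⁿ = q̄*(φⁿ⁺¹-φⁿ)), assume in addition Δt ≥ 0 and M̄ i ≥ 0 for every index i. Then the discrete energy Fᵏ = (1/2)⟨φᵏ,Gφᵏ⟩ + (1/4)⟨qᵏ,qᵏ⟩ satisfies Fⁿ⁺¹ ≤ Fⁿ; i.e. the scheme is unconditionally energy stable. -/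
import Mathlib


/-- Unconditional energy stability of the fully discrete EQ
scheme for the Allen–Cahn model with a Lagrange multiplier. -/
theorem discrete_energy_stability_AC_Lagrange_EQ
    (N : ℕ) (hN : 0 < N) (w : ℝ) (hw : 0 < w)
    (ip : (Fin N → ℝ) → (Fin N → ℝ) → ℝ)
    (hip : ∀ f g, ip f g = w * ∑ i, f i * g i)
    (one : Fin N → ℝ) (hone : one = fun _ => 1)
    (Δh : (Fin N → ℝ) →ₗ[ℝ] (Fin N → ℝ))
    (hsym : ∀ f g, ip (Δh f) g = ip f (Δh g))
    (a α : ℝ) (G : (Fin N → ℝ) → (Fin N → ℝ))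
    (hG : ∀ f, G f = Δh (Δh f) + (2 * a) • Δh f + α • f)
    (Δt : ℝ) (hΔt : 0 ≤ Δt) (Mbar qbar phin phin1 qn qn1 mu : Fin N → ℝ)
    (hMpos : ∀ i, 0 ≤ Mbar i)
    (hM : ip Mbar one ≠ 0)
    (hmu : mu = G ((1 / 2 : ℝ) • (phin + phin1)) +
      (1 / 2 : ℝ) • (((1 / 2 : ℝ) • (qn + qn1)) * qbar))
    (L : ℝ) (hL : L = ip Mbar mu / ip Mbar one)
    (hphi : phin1 - phin = (-Δt) • (Mbar * (mu - L • one)))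
    (hq : qn1 - qn = qbar * (phin1 - phin))
    (Fn Fn1 : ℝ)
    (hFn : Fn = (1 / 2) * ip phin (G phin) + (1 / 4) * ip qn qn)
    (hFn1 : Fn1 = (1 / 2) * ip phin1 (G phin1) + (1 / 4) * ip qn1 qn1) :
    Fn1 ≤ Fn := by
  -- basic bilinearity facts
  have ipsymm : ∀ f g, ip f g = ip g f := by
    intro f g
    simp only [hip]
    congr 1
    exact Finset.sum_congr rfl fun i _ => mul_comm _ _
  have hadd : ∀ f g h, ip f (g + h) = ip f g + ip f h := by
    intro f g h
    simp only [hip, Pi.add_apply]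
    rw [← mul_add, ← Finset.sum_add_distrib]
    congr 1
    exact Finset.sum_congr rfl fun i _ => by ring
  have hsub : ∀ f g h, ip f (g - h) = ip f g - ip f h := by
    intro f g h
    simp only [hip, Pi.sub_apply]
    rw [← mul_sub, ← Finset.sum_sub_distrib]
    congr 1
    exact Finset.sum_congr rfl fun i _ => by ring
  have hsmul : ∀ (c : ℝ) f g, ip f (c • g) = c * ip f g := by
    intro c f g
    simp only [hip, Pi.smul_apply, smul_eq_mul, Finset.mul_sum]
    exact Finset.sum_congr rfl fun i _ => by ring
  have hmul3 : ∀ f g h, ip (f * g) h = ip f (g * h) := by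
    intro f g h
    simp only [hip, Pi.mul_apply]
    congr 1
    exact Finset.sum_congr rfl fun i _ => by ring
  -- G is linear and self-adjoint
  have hGadd : ∀ x y, G (x + y) = G x + G y := by
    intro x y
    simp only [hG, map_add, smul_add]
    abel
  have hGsmul : ∀ (c : ℝ) x, G (c • x) = c • G x := by
    intro c x
    simp only [hG, map_smul, smul_add, smul_smul, mul_comm]
  have hGsym : ∀ f g, ip f (G g) = ip g (G f) := by
    intro f g
    have e1 : ip f (Δh (Δh g)) = ip g (Δh (Δh f)) := by
      rw [← hsym f (Δh g), ipsymm (Δh f) (Δh g), hsym g (Δh f)]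
    have e2 : ip f (Δh g) = ip g (Δh f) := by
      rw [← hsym f g]; exact ipsymm _ _
    simp only [hG, hadd, hsmul]
    rw [e1, e2, ipsymm f g]
  set d : Fin N → ℝ := phin1 - phin with hd
  set p : Fin N → ℝ := (1 / 2 : ℝ) • (qn + qn1) with hp
  -- φ part
  have h1 : ip (G ((1 / 2 : ℝ) • (phin + phin1))) d
      = (1 / 2) * ip phin1 (G phin1) - (1 / 2) * ip phin (G phin) := by
    rw [ipsymm, hGsmul, hsmul, hGadd, hadd, hd]
    have c1 : ip d (G phin) = ip (G phin) phin1 - ip (G phin) phin := by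
      rw [ipsymm, hsub]
    have c2 : ip d (G phin1) = ip (G phin1) phin1 - ip (G phin1) phin := by
      rw [ipsymm, hsub]
    have c3 : ip (G phin) phin1 = ip (G phin1) phin := by
      rw [ipsymm, hGsym, ipsymm]
    have c4 : ip (G phin) phin = ip phin (G phin) := ipsymm _ _
    have c5 : ip (G phin1) phin1 = ip phin1 (G phin1) := ipsymm _ _
    rw [c1, c2]
    linarith
  -- q part
  have h2 : ip ((1 / 2 : ℝ) • (p * qbar)) d
      = (1 / 4) * ip qn1 qn1 - (1 / 4) * ip qn qn := by
    rw [ipsymm, hsmul, ipsymm, hmul3]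
    have hqd : qbar * d = qn1 - qn := (hq).symm
    rw [hqd, hsub, hp]
    have e1 : ip p qn1 = (1 / 2 : ℝ) * (ip qn1 qn + ip qn1 qn1) := by
      rw [ipsymm, hp, hsmul, hadd]
    have e2 : ip p qn = (1 / 2 : ℝ) * (ip qn qn + ip qn qn1) := by
      rw [ipsymm, hp, hsmul, hadd]
    have e3 : ip qn1 qn = ip qn qn1 := ipsymm _ _
    rw [e1, e2]
    linarith
  -- total
  have h3 : ip mu d = Fn1 - Fn := by
    rw [ipsymm, hmu, hadd, ipsymm d _, ipsymm d _, h1, h2, hFn, hFn1]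
    ring
  -- the dissipation term
  set r : Fin N → ℝ := mu - L • one with hr
  have hmu' : mu = r + L • one := by rw [hr]; abel
  have h5 : ip (Mbar * r) one = 0 := by
    have : (r * one) = r := by
      funext i; simp [hone]
    rw [hmul3, this, hsub, hsmul, hL, div_mul_cancel₀ _ hM]
    ring
  have h4 : ip mu d = -Δt * ip (Mbar * r) r := by
    have e : ip mu (Mbar * r) = ip (Mbar * r) r := by
      rw [ipsymm mu (Mbar * r), hmu', hadd, hsmul, h5]
      ring
    rw [hphi, hsmul, e]
  have h6 : 0 ≤ ip (Mbar * r) r := by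
    rw [hip]
    apply mul_nonneg hw.le
    apply Finset.sum_nonneg
    intro i _
    have := hMpos i
    simp only [Pi.mul_apply]
    nlinarith [sq_nonneg (r i)]
  nlinarith [h3, h4, h6]
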